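/- Let v : ℝ → ℝ be continuous, let n be a real number with n ≠ 1, and let C be a real constant. Define z(x) = ((1−n)·∫₀ˣ v(t) dt + C)^{1/(1−n)} (real power). Then at every point x of an open interval on which (1−n)·∫₀ˣ v(t) dt + C > 0, z is differentiable and satisfies z'(x) = v(x)·z(x)^n. -/

import Mathlib

/-- The formula `z(x) = ((1-n)·∫₀ˣ v + C)^{1/(1-n)}` solves the separable
one-term Abel equation `z' = v(x)·z^n` on any open interval on which
`(1-n)·∫₀ˣ v + C > 0`. -/
theorem one_term_abel_solution (v : ℝ → ℝ) (hv : Continuous v)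
    (n : ℝ) (hn : n ≠ 1) (C : ℝ)
    (z : ℝ → ℝ)
    (hz : z = fun x => ((1 - n) * (∫ t in (0:ℝ)..x, v t) + C) ^ (1 / (1 - n)))
    (a b : ℝ)
    (hpos : ∀ x ∈ Set.Ioo a b, 0 < (1 - n) * (∫ t in (0:ℝ)..x, v t) + C) :
    ∀ x ∈ Set.Ioo a b, HasDerivAt z (v x * z x ^ n) x := by
  intro x hx
  have h1n : (1 : ℝ) - n ≠ 0 := sub_ne_zero.mpr (Ne.symm hn)
  set g : ℝ → ℝ := fun x => (1 - n) * (∫ t in (0:ℝ)..x, v t) + C with hg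
  have hgx : 0 < g x := hpos x hx
  have hgd : HasDerivAt g ((1 - n) * v x) x := by
    have : HasDerivAt (fun x => ∫ t in (0:ℝ)..x, v t) (v x) x :=
      (hv.integral_hasStrictDerivAt 0 x).hasDerivAt
    exact (this.const_mul (1 - n)).add_const C
  have hd := hgd.rpow_const (p := 1 / (1 - n)) (Or.inl hgx.ne')
  rw [hz]
  convert hd using 1
  rw [← Real.rpow_mul hgx.le]
  have he : (1 / (1 - n)) * n = 1 / (1 - n) - 1 := by field_simp; ring
  rw [he]
  field_simp
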